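/- arXiv:2111.01692 — 2 statements merged into one kernel-verified Lean document; each statement's English description precedes it below -/
import Mathlib

section
/- Let B and M be real symmetric positive definite n×n matrices, let f(X) = log det X + trace(M X⁻¹) for symmetric positive definite X, and let B' = G(B,M) = B^{1/2} (B^{-1/2} M B^{-1/2})^{1/2} B^{1/2} be the geometric mean of B and M. Then f(B') ≤ f(B); i.e., one step of the geometric-mean update rule does not increase the temporal Type-II cost. -/
open Matrix

/-- The unique symmetric positive semidefinite square root of a positive
semidefinite real matrix (junk value `0` off the positive semidefinite cone). -/
noncomputable def msqrt {n : ℕ} (A : Matrix (Fin n) (Fin n) ℝ) :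
    Matrix (Fin n) (Fin n) ℝ :=
  letI := Classical.propDecidable A.PosSemidef
  if h : A.PosSemidef then
    (h.1.eigenvectorUnitary : Matrix (Fin n) (Fin n) ℝ) *
      diagonal (Real.sqrt ∘ h.1.eigenvalues) *
      (star h.1.eigenvectorUnitary : Matrix (Fin n) (Fin n) ℝ)
  else 0

/-- The geometric mean `G(A,M) = A^{1/2} (A^{-1/2} M A^{-1/2})^{1/2} A^{1/2}` of two
positive definite matrices; the midpoint of the geodesic joining them on the
positive definite manifold. -/
noncomputable def geomMean {n : ℕ} (A M : Matrix (Fin n) (Fin n) ℝ) :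
    Matrix (Fin n) (Fin n) ℝ :=
  msqrt A * msqrt (msqrt A⁻¹ * M * msqrt A⁻¹) * msqrt A

open scoped MatrixOrder in
noncomputable def Matrix.PosSemidef.sqrt {n : ℕ} {A : Matrix (Fin n) (Fin n) ℝ}
    (h : A.PosSemidef) : Matrix (Fin n) (Fin n) ℝ :=
  (h.1.eigenvectorUnitary : Matrix (Fin n) (Fin n) ℝ) *
    diagonal (Real.sqrt ∘ h.1.eigenvalues) *
    (star h.1.eigenvectorUnitary : Matrix (Fin n) (Fin n) ℝ)

open scoped MatrixOrder in
lemma Matrix.PosSemidef.sqrt_eq_cfc {n : ℕ} {A : Matrix (Fin n) (Fin n) ℝ}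
    (h : A.PosSemidef) : h.sqrt = CFC.sqrt A := by
  rw [CFC.sqrt_eq_cfc, cfc_nnreal_eq_real _ A, h.1.cfc_eq]
  simp only [IsHermitian.cfc, Unitary.conjStarAlgAut_apply, Matrix.PosSemidef.sqrt]
  congr 3
  funext i
  simp [h.eigenvalues_nonneg i]

open scoped MatrixOrder in
lemma Matrix.PosSemidef.posSemidef_sqrt {n : ℕ} {A : Matrix (Fin n) (Fin n) ℝ}
    (h : A.PosSemidef) : h.sqrt.PosSemidef := by
  rw [h.sqrt_eq_cfc]; exact (CFC.sqrt_nonneg A).posSemidef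

open scoped MatrixOrder in
lemma Matrix.PosSemidef.sqrt_mul_self {n : ℕ} {A : Matrix (Fin n) (Fin n) ℝ}
    (h : A.PosSemidef) : h.sqrt * h.sqrt = A := by
  rw [h.sqrt_eq_cfc]; exact CFC.sqrt_mul_sqrt_self A h.nonneg

open scoped MatrixOrder in
lemma Matrix.PosSemidef.eq_sqrt_of_sq_eq {n : ℕ} {A B : Matrix (Fin n) (Fin n) ℝ}
    (hA : A.PosSemidef) (hB : B.PosSemidef) (hAB : A ^ 2 = B) : A = hB.sqrt := by
  rw [hB.sqrt_eq_cfc]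
  exact (CFC.sqrt_unique (by rw [← sq]; exact hAB) hA.nonneg).symm

lemma sqrt_posDef {n : ℕ} {C : Matrix (Fin n) (Fin n) ℝ} (hC : C.PosDef) :
    hC.posSemidef.sqrt.PosDef := by
  set R := hC.posSemidef.sqrt with hRdef
  have hRpsd : R.PosSemidef := hC.posSemidef.posSemidef_sqrt
  refine PosDef.of_dotProduct_mulVec_pos hRpsd.1 fun x hx => ?_
  rcases lt_or_eq_of_le (hRpsd.dotProduct_mulVec_nonneg x) with h | h
  · exact h
  · exfalso
    have h0 : R *ᵥ x = 0 := (hRpsd.dotProduct_mulVec_zero_iff x).mp h.symm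
    have hCx : C *ᵥ x = 0 := by
      rw [← hC.posSemidef.sqrt_mul_self, ← mulVec_mulVec, h0, mulVec_zero]
    have hpos := hC.dotProduct_mulVec_pos hx
    rw [hCx, dotProduct_zero] at hpos
    exact lt_irrefl 0 hpos

lemma trace_eq_sum_eigenvalues' {n : ℕ} {A : Matrix (Fin n) (Fin n) ℝ}
    (hA : A.IsHermitian) : A.trace = ∑ i, hA.eigenvalues i := by
  conv_lhs => rw [hA.spectral_theorem]
  rw [Unitary.conjStarAlgAut_apply, trace_mul_comm, ← mul_assoc, (Matrix.mem_unitaryGroup_iff').mp (hA.eigenvectorUnitary).2,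
    one_mul, trace_diagonal]
  simp

lemma key_ineq {n : ℕ} {R : Matrix (Fin n) (Fin n) ℝ} (hR : R.PosDef) :
    Real.log R.det + R.trace ≤ (R * R).trace := by
  have hev := hR.eigenvalues_pos
  have h1 : Real.log R.det ≤ R.trace - n := by
    have hdet : R.det = ∏ i, hR.1.eigenvalues i := by simpa using hR.1.det_eq_prod_eigenvalues
    rw [hdet, Real.log_prod (fun i _ => (hev i).ne'), trace_eq_sum_eigenvalues' hR.1]
    calc ∑ i, Real.log (hR.1.eigenvalues i)
        ≤ ∑ i, (hR.1.eigenvalues i - 1) :=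
          Finset.sum_le_sum (fun i _ => Real.log_le_sub_one_of_pos (hev i))
      _ = (∑ i, hR.1.eigenvalues i) - n := by
          rw [Finset.sum_sub_distrib]; simp
  have h2 : 2 * R.trace - n ≤ (R * R).trace := by
    have hAH : ((R - 1 : Matrix (Fin n) (Fin n) ℝ)).IsHermitian :=
      hR.1.sub isHermitian_one
    have hnn : 0 ≤ ((R - 1) * (R - 1) : Matrix (Fin n) (Fin n) ℝ).trace := by
      rw [Matrix.trace]
      apply Finset.sum_nonneg; intro i _
      rw [Matrix.diag_apply, Matrix.mul_apply]
      apply Finset.sum_nonneg; intro j _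
      have hs : (R - 1 : Matrix (Fin n) (Fin n) ℝ) j i = (R - 1) i j := by
        have := congrFun (congrFun hAH i) j
        simpa [Matrix.conjTranspose_apply] using this
      rw [hs]; exact mul_self_nonneg _
    have hexp : ((R - 1) * (R - 1) : Matrix (Fin n) (Fin n) ℝ)
        = R * R - R - R + 1 := by noncomm_ring
    rw [hexp, trace_add, trace_sub, trace_sub, trace_one] at hnn
    simp only [Fintype.card_fin] at hnn
    linarith
  linarith

lemma conj_posDef {n : ℕ} {M : Matrix (Fin n) (Fin n) ℝ} (hM : M.PosDef)
    {A : Matrix (Fin n) (Fin n) ℝ} (hA : IsUnit A) : (Aᴴ * M * A).PosDef := by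
  refine PosDef.of_dotProduct_mulVec_pos (isHermitian_conjTranspose_mul_mul A hM.1) fun x hx => ?_
  have hx' : A *ᵥ x ≠ 0 := fun h => hx <|
    (Matrix.mulVec_injective_iff_isUnit.mpr hA) (by simp [h])
  simpa only [star_mulVec, dotProduct_mulVec, vecMul_vecMul] using hM.dotProduct_mulVec_pos hx'

lemma msqrt_eq {n : ℕ} {A : Matrix (Fin n) (Fin n) ℝ} (h : A.PosSemidef) :
    msqrt A = h.sqrt := by
  unfold msqrt; rw [dif_pos h]; rfl

/-- Descent property of one geometric-mean update step for the temporal Type-II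
cost `f(X) = log det X + tr(M X⁻¹)`: with `B' = G(B, M)` one has `f(B') ≤ f(B)`. -/
theorem stmt_7 {n : ℕ} (B M : Matrix (Fin n) (Fin n) ℝ)
    (hB : B.PosDef) (hM : M.PosDef) :
    Real.log (geomMean B M).det + (M * (geomMean B M)⁻¹).trace ≤
      Real.log B.det + (M * B⁻¹).trace := by
  -- S = sqrt B
  set S := hB.posSemidef.sqrt with hSdef
  have hS : S.PosDef := sqrt_posDef hB
  have hSS : S * S = B := hB.posSemidef.sqrt_mul_self
  have hSunit : IsUnit S := hS.isUnit
  -- S inverse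
  have hSinvPD : (S⁻¹).PosDef := hS.inv
  have hSinvSq : S⁻¹ ^ 2 = B⁻¹ := by
    rw [pow_two, ← Matrix.mul_inv_rev, hSS]
  have hmsBinv : msqrt B⁻¹ = S⁻¹ := by
    rw [msqrt_eq hB.inv.posSemidef]
    exact (hSinvPD.posSemidef.eq_sqrt_of_sq_eq hB.inv.posSemidef hSinvSq).symm
  -- C = S⁻¹ M S⁻¹
  have hC : (S⁻¹ * M * S⁻¹).PosDef := by
    have := conj_posDef hM hSinvPD.isUnit
    rwa [hSinvPD.1.eq] at this
  -- R = sqrt C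
  set R := hC.posSemidef.sqrt with hRdef
  have hR : R.PosDef := sqrt_posDef hC
  have hRR : R * R = S⁻¹ * M * S⁻¹ := hC.posSemidef.sqrt_mul_self
  have hRunit : IsUnit R := hR.isUnit
  -- geomMean unfolds
  have hG : geomMean B M = S * R * S := by
    rw [geomMean, hmsBinv, msqrt_eq hB.posSemidef, msqrt_eq hC.posSemidef]
  rw [hG]
  -- determinant part
  have hdetS : S.det * S.det = B.det := by rw [← det_mul, hSS]
  have hlog : Real.log (S * R * S).det = Real.log B.det + Real.log R.det := by
    rw [det_mul, det_mul, show S.det * R.det * S.det = (S.det * S.det) * R.det by ring,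
      hdetS, Real.log_mul hB.det_pos.ne' hR.det_pos.ne']
  -- inverse part
  have hinv : (S * R * S)⁻¹ = S⁻¹ * (R⁻¹ * S⁻¹) := by
    rw [Matrix.mul_inv_rev, Matrix.mul_inv_rev]
  have hRinvR : R⁻¹ * R = 1 := Matrix.nonsing_inv_mul R (isUnit_iff_isUnit_det R |>.mp hRunit)
  -- trace of M * (S R S)⁻¹ = trace R
  have htr1 : (M * (S * R * S)⁻¹).trace = R.trace := by
    rw [hinv, show M * (S⁻¹ * (R⁻¹ * S⁻¹)) = (M * S⁻¹) * (R⁻¹ * S⁻¹) by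
      noncomm_ring, trace_mul_comm, show R⁻¹ * S⁻¹ * (M * S⁻¹) = R⁻¹ * (S⁻¹ * M * S⁻¹) by
      noncomm_ring, ← hRR, show R⁻¹ * (R * R) = (R⁻¹ * R) * R by noncomm_ring,
      hRinvR, one_mul]
  -- trace of M * B⁻¹ = trace (R * R)
  have htr2 : (M * B⁻¹).trace = (R * R).trace := by
    rw [← hSS, Matrix.mul_inv_rev, show M * (S⁻¹ * S⁻¹) = (M * S⁻¹) * S⁻¹ by noncomm_ring,
      trace_mul_comm, show S⁻¹ * (M * S⁻¹) = S⁻¹ * M * S⁻¹ by noncomm_ring, ← hRR]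
  rw [hlog, htr1, htr2]
  have := key_ineq hR
  linarith
end

section
/- Let A be a real symmetric positive definite n×n matrix and M a real symmetric positive semidefinite n×n matrix, and define the surrogate g(B) = trace(A B) + trace(M B⁻¹) on symmetric positive definite n×n matrices. Then the gradient condition for stationarity of g at B is A − B⁻¹ M B⁻¹ = 0, i.e., a symmetric positive definite matrix B is a stationary point of g if and only if B A B = M; when M is positive definite this stationary point is unique and equals the geometric mean G(A⁻¹, M) = A^{-1/2} (A^{1/2} M A^{1/2})^{1/2} A^{-1/2}. -/
open Matrix

section Aux

open scoped MatrixOrder in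
lemma msqrt_eq_sqrt {n : ℕ} {A : Matrix (Fin n) (Fin n) ℝ} (hA : A.PosSemidef) :
    msqrt A = CFC.sqrt A := by
  rw [msqrt, dif_pos hA, CFC.sqrt_eq_cfc, cfc_nnreal_eq_real _ A hA.nonneg, hA.1.cfc_eq]
  simp only [IsHermitian.cfc, Unitary.conjStarAlgAut_apply]
  congr 3
  funext i
  simp [max_eq_left (hA.eigenvalues_nonneg i)]

open scoped MatrixOrder in
lemma msqrt_posSemidef {n : ℕ} {A : Matrix (Fin n) (Fin n) ℝ} (hA : A.PosSemidef) :
    (msqrt A).PosSemidef := by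
  rw [msqrt_eq_sqrt hA]
  exact Matrix.nonneg_iff_posSemidef.mp (CFC.sqrt_nonneg A)

open scoped MatrixOrder in
lemma msqrt_mul_self {n : ℕ} {A : Matrix (Fin n) (Fin n) ℝ} (hA : A.PosSemidef) :
    msqrt A * msqrt A = A := by
  rw [msqrt_eq_sqrt hA]
  exact CFC.sqrt_mul_sqrt_self A hA.nonneg

open scoped MatrixOrder in
lemma msqrt_unique {n : ℕ} {X Y : Matrix (Fin n) (Fin n) ℝ} (hX : X.PosSemidef)
    (hY : Y.PosSemidef) (h : X ^ 2 = Y) : X = msqrt Y := by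
  rw [msqrt_eq_sqrt hY]
  exact ((CFC.sqrt_eq_iff Y X hY.nonneg hX.nonneg).mpr (by rw [← h, pow_two])).symm

end Aux

section
variable {n : ℕ}
attribute [local instance] Matrix.linftyOpNormedRing Matrix.linftyOpNormedAlgebra

noncomputable local instance : CompleteSpace (Matrix (Fin n) (Fin n) ℝ) :=
  inferInstanceAs (CompleteSpace (Fin n → Fin n → ℝ))

lemma surrogate_hasDerivAt (A M B V : Matrix (Fin n) (Fin n) ℝ) (hB : IsUnit B) :
    HasDerivAt (fun t : ℝ => (A * (B + t • V)).trace + (M * (B + t • V)⁻¹).trace)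
      ((A * V).trace - (M * (B⁻¹ * V * B⁻¹)).trace) 0 := by
  have hline : HasDerivAt (fun t : ℝ => B + t • V) V 0 := by
    have h := ((hasDerivAt_id (0:ℝ)).smul_const V).const_add B
    simp only [id, one_smul] at h
    exact h
  have hinv : HasDerivAt (fun t : ℝ => Ring.inverse (B + t • V)) (-(B⁻¹ * V * B⁻¹)) 0 := by
    have hu := hasFDerivAt_ringInverse (𝕜 := ℝ) hB.unit
    rw [hB.unit_spec] at hu
    have hu' : HasFDerivAt Ring.inverse
        (-(ContinuousLinearMap.mulLeftRight ℝ _ (↑hB.unit⁻¹)) (↑hB.unit⁻¹)) (B + (0:ℝ) • V) := by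
      simpa using hu
    have h := hu'.comp_hasDerivAt 0 hline
    simp [Function.comp_def, ContinuousLinearMap.mulLeftRight_apply, Matrix.coe_units_inv,
      hB.unit_spec] at h
    exact h
  have h1 : HasDerivAt (fun t : ℝ => (A * (B + t • V)).trace) ((A * V).trace) 0 := by
    have he : (fun t : ℝ => (A * (B + t • V)).trace)
        = fun t => (A * B).trace + t * (A * V).trace := by
      funext t
      simp [mul_add, Matrix.mul_smul, Matrix.trace_add, Matrix.trace_smul, smul_eq_mul]
    rw [he]
    simpa using (hasDerivAt_mul_const ((A * V).trace)).const_add ((A * B).trace)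
  have h2 : HasDerivAt (fun t : ℝ => (M * (B + t • V)⁻¹).trace)
      (-(M * (B⁻¹ * V * B⁻¹)).trace) 0 := by
    let L : Matrix (Fin n) (Fin n) ℝ →L[ℝ] ℝ :=
      LinearMap.toContinuousLinearMap
        ((Matrix.traceLinearMap (Fin n) ℝ ℝ).comp (LinearMap.mulLeft ℝ M))
    have h := L.hasFDerivAt.comp_hasDerivAt 0 hinv
    have he : (fun t : ℝ => (M * (B + t • V)⁻¹).trace)
        = fun t : ℝ => L (Ring.inverse (B + t • V)) := by
      funext t
      simp [L, Matrix.nonsing_inv_eq_ringInverse]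
    rw [he]
    have e : (-(M * (B⁻¹ * V * B⁻¹)).trace) = L (-(B⁻¹ * V * B⁻¹)) := by
      simp [L, Matrix.mul_neg, Matrix.trace_neg]
    rw [e]
    exact h
  rw [sub_eq_add_neg]
  exact h1.add h2

lemma surrogate_deriv (A M B V : Matrix (Fin n) (Fin n) ℝ) (hB : IsUnit B) :
    deriv (fun t : ℝ => (A * (B + t • V)).trace + (M * (B + t • V)⁻¹).trace) 0
      = (A * V).trace - ((B⁻¹ * M * B⁻¹) * V).trace := by
  rw [(surrogate_hasDerivAt A M B V hB).deriv]
  congr 1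
  rw [show M * (B⁻¹ * V * B⁻¹) = (M * B⁻¹ * V) * B⁻¹ by noncomm_ring,
    Matrix.trace_mul_comm,
    show B⁻¹ * (M * B⁻¹ * V) = (B⁻¹ * M * B⁻¹) * V by noncomm_ring]

lemma stationary_iff (A M : Matrix (Fin n) (Fin n) ℝ) (hA : A.PosDef) (hM : M.PosSemidef)
    (B : Matrix (Fin n) (Fin n) ℝ) (hB : B.PosDef) :
    (∀ V : Matrix (Fin n) (Fin n) ℝ, V.IsSymm →
        deriv (fun t : ℝ =>
          (A * (B + t • V)).trace + (M * (B + t • V)⁻¹).trace) 0 = 0) ↔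
      B * A * B = M := by
  have hBu : IsUnit B := hB.isUnit
  have hBdet : IsUnit B.det := (Matrix.isUnit_iff_isUnit_det B).mp hBu
  have hsymm : ∀ {X : Matrix (Fin n) (Fin n) ℝ}, X.IsHermitian → X.IsSymm := by
    intro X h
    rwa [Matrix.IsHermitian, Matrix.conjTranspose_eq_transpose_of_trivial] at h
  have hBsymm : B.IsSymm := hsymm hB.isHermitian
  have hBinv_symm : (B⁻¹).IsSymm := by
    rw [Matrix.IsSymm, Matrix.transpose_nonsing_inv, hBsymm.eq]
  have hMsymm : M.IsSymm := hsymm hM.isHermitian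
  have hAsymm : A.IsSymm := hsymm hA.isHermitian
  constructor
  · intro h
    set C := A - B⁻¹ * M * B⁻¹ with hC
    have hCsymm : C.IsSymm := by
      rw [Matrix.IsSymm, hC, Matrix.transpose_sub, hAsymm.eq, Matrix.transpose_mul,
        Matrix.transpose_mul, hBinv_symm.eq, hMsymm.eq, Matrix.mul_assoc]
    have h0 := h C hCsymm
    rw [surrogate_deriv A M B C hBu] at h0
    have hCC : (C * C).trace = 0 := by
      rw [← h0, hC, Matrix.sub_mul, Matrix.trace_sub]
    have hC0 : C = 0 := by
      have htr : (C * C).trace = ∑ i, ∑ j, C i j * C j i := by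
        simp [Matrix.trace, Matrix.diag, Matrix.mul_apply]
      have hsum : ∑ i, ∑ j, (C i j) ^ 2 = 0 := by
        rw [← hCC, htr]
        refine Finset.sum_congr rfl fun i _ => Finset.sum_congr rfl fun j _ => ?_
        rw [pow_two, hCsymm.apply i j]
      ext i j
      have h1 := (Finset.sum_eq_zero_iff_of_nonneg
        (fun i _ => Finset.sum_nonneg fun j _ => sq_nonneg (C i j))).mp hsum i (Finset.mem_univ i)
      have h2 := (Finset.sum_eq_zero_iff_of_nonneg
        (fun j _ => sq_nonneg (C i j))).mp h1 j (Finset.mem_univ j)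
      simpa using pow_eq_zero_iff two_ne_zero |>.mp h2
    have hAeq : A = B⁻¹ * M * B⁻¹ := by
      have := sub_eq_zero.mp hC0
      exact this
    rw [hAeq]
    calc B * (B⁻¹ * M * B⁻¹) * B = (B * B⁻¹) * M * (B⁻¹ * B) := by noncomm_ring
      _ = M := by
        rw [Matrix.mul_nonsing_inv _ hBdet, Matrix.nonsing_inv_mul _ hBdet, one_mul, mul_one]
  · intro hBAB V hV
    rw [surrogate_deriv A M B V hBu]
    have hAeq : B⁻¹ * M * B⁻¹ = A := by
      rw [← hBAB]
      calc B⁻¹ * (B * A * B) * B⁻¹ = (B⁻¹ * B) * A * (B * B⁻¹) := by noncomm_ring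
        _ = A := by
          rw [Matrix.mul_nonsing_inv _ hBdet, Matrix.nonsing_inv_mul _ hBdet, one_mul, mul_one]
    rw [hAeq, sub_self]
end

section Aux2
variable {n : ℕ}

lemma riccati_unique (A M : Matrix (Fin n) (Fin n) ℝ) (hA : A.PosDef) (hM : M.PosSemidef)
    (B : Matrix (Fin n) (Fin n) ℝ) (hB : B.PosDef) :
    B * A * B = M ↔ B = msqrt A⁻¹ * msqrt (msqrt A * M * msqrt A) * msqrt A⁻¹ := by
  have hApsd := hA.posSemidef
  set S := msqrt A with hSdef
  have hSpsd : S.PosSemidef := msqrt_posSemidef hApsd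
  have hSH : Sᴴ = S := hSpsd.isHermitian.eq
  have hSS : S * S = A := msqrt_mul_self hApsd
  have hmsA : msqrt A = S := rfl
  have hSdet : IsUnit S.det := by
    have hdet : S.det * S.det = A.det := by rw [← Matrix.det_mul, hSS]
    have hdA : A.det ≠ 0 := hA.det_pos.ne'
    exact isUnit_iff_ne_zero.mpr fun h => hdA (by rw [← hdet, h, zero_mul])
  have hAinv_psd : (A⁻¹).PosSemidef := hA.inv.posSemidef
  have hSinv_psd : (S⁻¹).PosSemidef := hSpsd.inv
  have hTS : msqrt A⁻¹ = S⁻¹ := by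
    exact (msqrt_unique hSinv_psd hAinv_psd
      (by rw [pow_two, ← Matrix.mul_inv_rev, hSS])).symm
  have hSMS : (S * M * S).PosSemidef := by
    have := hM.mul_mul_conjTranspose_same S
    rwa [hSH] at this
  have hmsSMS : msqrt (msqrt A * M * msqrt A) = msqrt (S * M * S) := by
    rw [hmsA]
  set R := msqrt (S * M * S) with hRdef
  have hRR : R * R = S * M * S := msqrt_mul_self hSMS
  constructor
  · intro hBAB
    have hSBS : (S * B * S).PosSemidef := by
      have := hB.posSemidef.mul_mul_conjTranspose_same S
      rwa [hSH] at this
    have hsq : (S * B * S) ^ 2 = S * M * S := by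
      rw [pow_two, ← hBAB, ← hSS]
      noncomm_ring
    have hval : S * B * S = R := msqrt_unique hSBS hSMS hsq
    rw [hTS, hmsSMS, ← hval]
    calc B = (S⁻¹ * S) * B * (S * S⁻¹) := by
          rw [Matrix.nonsing_inv_mul _ hSdet, Matrix.mul_nonsing_inv _ hSdet, one_mul, mul_one]
      _ = S⁻¹ * (S * B * S) * S⁻¹ := by noncomm_ring
  · intro hBeq
    rw [hTS, hmsSMS] at hBeq
    rw [hBeq, ← hSS]
    have h1 : (S⁻¹ * R * S⁻¹) * (S * S) * (S⁻¹ * R * S⁻¹)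
        = S⁻¹ * ((R * (S⁻¹ * S)) * ((S * S⁻¹) * R)) * S⁻¹ := by noncomm_ring
    rw [h1, Matrix.nonsing_inv_mul _ hSdet, Matrix.mul_nonsing_inv _ hSdet, mul_one, one_mul,
      hRR]
    calc S⁻¹ * (S * M * S) * S⁻¹ = (S⁻¹ * S) * M * (S * S⁻¹) := by noncomm_ring
      _ = M := by
        rw [Matrix.nonsing_inv_mul _ hSdet, Matrix.mul_nonsing_inv _ hSdet, one_mul, mul_one]


/-- Stationarity of the surrogate `g(B) = tr(A B) + tr(M B⁻¹)` (Part II of the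
proof of Theorem 2 of the paper): a symmetric positive definite `B` is a
stationary point of `g` (i.e. all directional derivatives of `g` at `B` along
symmetric directions vanish, expressing `A − B⁻¹ M B⁻¹ = 0`) if and only if
`B A B = M`; and when `M` is positive definite this stationary point is unique
and equals the geometric mean
`G(A⁻¹, M) = A^{-1/2} (A^{1/2} M A^{1/2})^{1/2} A^{-1/2}`. -/
theorem stmt_17 {n : ℕ} (A M : Matrix (Fin n) (Fin n) ℝ)
    (hA : A.PosDef) (hM : M.PosSemidef) :
    (∀ B : Matrix (Fin n) (Fin n) ℝ, B.PosDef →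
      ((∀ V : Matrix (Fin n) (Fin n) ℝ, V.IsSymm →
          deriv (fun t : ℝ =>
            (A * (B + t • V)).trace + (M * (B + t • V)⁻¹).trace) 0 = 0) ↔
        B * A * B = M)) ∧
    (M.PosDef → ∀ B : Matrix (Fin n) (Fin n) ℝ, B.PosDef →
      ((∀ V : Matrix (Fin n) (Fin n) ℝ, V.IsSymm →
          deriv (fun t : ℝ =>
            (A * (B + t • V)).trace + (M * (B + t • V)⁻¹).trace) 0 = 0) ↔
        B = msqrt A⁻¹ * msqrt (msqrt A * M * msqrt A) * msqrt A⁻¹)) := by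
  refine ⟨fun B hB => stationary_iff A M hA hM B hB, fun _ B hB => ?_⟩
  exact (stationary_iff A M hA hM B hB).trans (riccati_unique A M hA hM B hB)
end Aux2
end
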